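/- In a Euclidean Hurwitz algebra, if x, y, w are orthonormal vectors each orthogonal to the unit element 1, and x · y is orthogonal to w, then x · (y · w) = -((x · y) · w). -/

import Mathlib

theorem stmt_11 {A : Type*} [NormedAddCommGroup A] [InnerProductSpace ℝ A]
    (mul : A →ₗ[ℝ] A →ₗ[ℝ] A) (e : A) (he : ‖e‖ = 1)
    (hul : ∀ x, mul e x = x) (hur : ∀ x, mul x e = x)
    (hmon : ∀ x y, ‖mul x y‖ = ‖x‖ * ‖y‖)
    (x y w : A) (hx : ‖x‖ = 1) (hy : ‖y‖ = 1) (hw : ‖w‖ = 1)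
    (hxe : (inner ℝ x e) = 0) (hye : (inner ℝ y e) = 0) (hwe : (inner ℝ w e) = 0)
    (hxy : (inner ℝ x y) = 0) (hxw : (inner ℝ x w) = 0) (hyw : (inner ℝ y w) = 0)
    (hxyw : (inner ℝ (mul x y) w) = 0) :
    mul x (mul y w) = -(mul (mul x y) w) := by
  -- L1 : ⟪a b, a c⟫ = ‖a‖² ⟪b, c⟫
  have L1 : ∀ a b c : A, (inner ℝ (mul a b) (mul a c) : ℝ) = ‖a‖ ^ 2 * inner ℝ b c := by
    intro a b c
    have h1 := real_inner_eq_norm_add_mul_self_sub_norm_mul_self_sub_norm_mul_self_div_two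
      (mul a b) (mul a c)
    have h2 := real_inner_eq_norm_add_mul_self_sub_norm_mul_self_sub_norm_mul_self_div_two b c
    have hadd : mul a b + mul a c = mul a (b + c) := (map_add (mul a) b c).symm
    rw [hadd, hmon, hmon, hmon] at h1
    rw [h1, h2]; ring
  -- L1' : ⟪a c, b c⟫ = ⟪a, b⟫ ‖c‖²
  have L1' : ∀ a b c : A, (inner ℝ (mul a c) (mul b c) : ℝ) = inner ℝ a b * ‖c‖ ^ 2 := by
    intro a b c
    have h1 := real_inner_eq_norm_add_mul_self_sub_norm_mul_self_sub_norm_mul_self_div_two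
      (mul a c) (mul b c)
    have h2 := real_inner_eq_norm_add_mul_self_sub_norm_mul_self_sub_norm_mul_self_div_two a b
    have hadd : mul a c + mul b c = mul (a + b) c := by
      rw [map_add]; rfl
    rw [hadd, hmon, hmon, hmon] at h1
    rw [h1, h2]; ring
  -- L2 : exchange identity
  have L2 : ∀ a b c d : A, (inner ℝ (mul a c) (mul b d) : ℝ) + inner ℝ (mul a d) (mul b c)
      = 2 * inner ℝ a b * inner ℝ c d := by
    intro a b c d
    have h1 := L1' a b (c + d)
    have e1 : mul a (c + d) = mul a c + mul a d := map_add (mul a) c d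
    have e2 : mul b (c + d) = mul b c + mul b d := map_add (mul b) c d
    rw [e1, e2, inner_add_left, inner_add_right, inner_add_right, norm_add_sq_real] at h1
    have h2 := L1' a b c
    have h3 := L1' a b d
    linear_combination h1 - h2 - h3
  -- L3 : ⟪a b, c⟫ + ⟪a c, b⟫ = 2 ⟪a, e⟫ ⟪b, c⟫
  have L3 : ∀ a b c : A, (inner ℝ (mul a b) c : ℝ) + inner ℝ (mul a c) b
      = 2 * inner ℝ a e * inner ℝ b c := by
    intro a b c
    have h := L2 a e b c
    rwa [hul, hul] at h
  -- L3' : ⟪a b, c⟫ + ⟪a, c b⟫ = 2 ⟪a, c⟫ ⟪b, e⟫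
  have L3' : ∀ a b c : A, (inner ℝ (mul a b) c : ℝ) + inner ℝ a (mul c b)
      = 2 * inner ℝ a c * inner ℝ b e := by
    intro a b c
    have h := L2 a c b e
    rw [hur, hur] at h
    have h4 : (inner ℝ (mul a b) c : ℝ) = inner ℝ c (mul a b) := real_inner_comm _ _
    have h5 : (inner ℝ a (mul c b) : ℝ) = inner ℝ (mul c b) a := real_inner_comm _ _
    linarith [h, h4, h5]
  -- ⟪x w, e⟫ = 0
  have hue : (inner ℝ (mul x w) e : ℝ) = 0 := by
    have h := L3 x w e
    rw [hur, hxe] at h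
    linarith [h, hxw]
  -- ⟪x w, y⟫ = 0
  have huy : (inner ℝ (mul x w) y : ℝ) = 0 := by
    have h := L3 x w y
    rw [hxe] at h
    linarith [h, hxyw]
  -- square identity : mul a a = (2 ⟪a,e⟫) • a - ‖a‖² • e
  have sq : ∀ a : A, mul a a = (2 * (inner ℝ a e : ℝ)) • a - (‖a‖ ^ 2) • e := by
    intro a
    apply ext_inner_right ℝ
    intro c
    have h1 := L3 a a c
    have h2 : (inner ℝ (mul a c) a : ℝ) = ‖a‖ ^ 2 * inner ℝ e c := by
      have h := L1 a c e
      rw [hur] at h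
      rw [h, real_inner_comm c e]
    rw [inner_sub_left, real_inner_smul_left, real_inner_smul_left]
    linarith [h1, h2]
  -- anticommutation of y and (x w)
  have hanti : mul y (mul x w) + mul (mul x w) y = 0 := by
    have hs := sq (y + mul x w)
    have hexp : mul (y + mul x w) (y + mul x w)
        = mul y y + mul y (mul x w) + mul (mul x w) y + mul (mul x w) (mul x w) := by
      rw [map_add]
      simp only [LinearMap.add_apply, map_add]
      abel
    have hyue : (inner ℝ (y + mul x w) e : ℝ) = 0 := by
      rw [inner_add_left, hye, hue]; ring
    have hnorm : ‖y + mul x w‖ ^ 2 = ‖y‖ ^ 2 + ‖mul x w‖ ^ 2 := by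
      have hy' : (inner ℝ y (mul x w) : ℝ) = 0 := by rw [real_inner_comm]; exact huy
      rw [norm_add_sq_real, hy']; ring
    rw [hexp, hyue, hnorm] at hs
    have hz : (2 * (0:ℝ)) • (y + mul x w) = 0 := by simp
    rw [hz] at hs
    have hsy := sq y
    have hsu := sq (mul x w)
    rw [hye] at hsy
    rw [hue] at hsu
    have hy2 : mul y y = -(‖y‖ ^ 2 • e) := by rw [hsy]; simp
    have hu2 : mul (mul x w) (mul x w) = -(‖mul x w‖ ^ 2 • e) := by rw [hsu]; simp
    rw [hy2, hu2, add_smul] at hs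
    calc mul y (mul x w) + mul (mul x w) y
        = (-(‖y‖ ^ 2 • e) + mul y (mul x w) + mul (mul x w) y + -(‖mul x w‖ ^ 2 • e))
          + (‖y‖ ^ 2 • e + ‖mul x w‖ ^ 2 • e) := by abel
      _ = (0 - (‖y‖ ^ 2 • e + ‖mul x w‖ ^ 2 • e)) + (‖y‖ ^ 2 • e + ‖mul x w‖ ^ 2 • e) := by
          rw [hs]
      _ = 0 := by abel
  -- x (y w) = -(y (x w))
  have hA : mul x (mul y w) = -(mul y (mul x w)) := by
    apply ext_inner_right ℝ
    intro c
    have h1 := L3 x (mul y w) c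
    have h2 := L2 x y c w
    have h3 := L3 y (mul x w) c
    have h4 := real_inner_comm (mul x w) (mul y c)
    rw [hxe] at h1
    rw [hxy] at h2
    rw [hye] at h3
    rw [inner_neg_left]
    linarith [h1, h2, h3, h4]
  -- (x y) w = -((x w) y)
  have hB : mul (mul x y) w = -(mul (mul x w) y) := by
    apply ext_inner_right ℝ
    intro c
    have h1 := L3' (mul x y) w c
    have h2 := L2 x c y w
    have h3 := L3' (mul x w) y c
    rw [hwe] at h1
    rw [hyw] at h2
    rw [hye] at h3
    rw [inner_neg_left]
    linarith [h1, h2, h3]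
  have hC : mul (mul x w) y = -(mul y (mul x w)) := eq_neg_of_add_eq_zero_right hanti
  rw [hA, hB, hC, neg_neg]
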